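/- Suppose [τ_a, τ_b] ⊆ (0,1) is an interval on which f(s) > 0 for all s ∈ [τ_a, τ_b] and the escalation benefit m_H − m_L is strictly increasing on [τ_a, τ_b]. Then for every τ ∈ (τ_a, τ_b), letting α ∈ (0,1) be the unique weight with α·C(τ_a) + (1−α)·C(τ_b) = C(τ), the randomized mixture of the two endpoint thresholds strictly dominates the deterministic threshold at equal expected cost: α·U(τ_a) + (1−α)·U(τ_b) > U(τ). -/

import Mathlib

/-- On an interval `[τa, τb] ⊆ (0,1)` with `f > 0` where the
escalation benefit `mH - mL` is strictly increasing, for every interior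
`τ ∈ (τa, τb)` there is a unique weight `α ∈ (0,1)` matching expected cost,
`α C τa + (1-α) C τb = C τ`, and the randomized mixture of the endpoint
thresholds strictly dominates the deterministic threshold at equal expected
cost: `α U τa + (1-α) U τb > U τ`. -/
theorem two_model_cascade_randomization_beats_deterministic
    (f mL mH : ℝ → ℝ) (hf : Continuous f)
    (hf0 : ∀ s ∈ Set.Icc (0:ℝ) 1, 0 ≤ f s)
    (hfint : (∫ s in (0:ℝ)..1, f s) = 1)
    (hmL : Continuous mL) (hmH : Continuous mH)
    (cL cH : ℝ) (hcL : 0 ≤ cL) (hcH : 0 < cH)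
    (C U : ℝ → ℝ)
    (hC : ∀ τ, C τ = cL + cH * ∫ s in (0:ℝ)..τ, f s)
    (hU : ∀ τ, U τ = (∫ s in (0:ℝ)..τ, mH s * f s) + ∫ s in τ..(1:ℝ), mL s * f s)
    (τa τb : ℝ) (hab : τa < τb) (hIcc : Set.Icc τa τb ⊆ Set.Ioo (0:ℝ) 1)
    (hfpos : ∀ s ∈ Set.Icc τa τb, 0 < f s)
    (hinc : StrictMonoOn (fun s => mH s - mL s) (Set.Icc τa τb))
    (τ : ℝ) (hτ : τ ∈ Set.Ioo τa τb) :
    ∃ α ∈ Set.Ioo (0:ℝ) 1,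
      α * C τa + (1 - α) * C τb = C τ ∧
      (∀ α' ∈ Set.Ioo (0:ℝ) 1, α' * C τa + (1 - α') * C τb = C τ → α' = α) ∧
      α * U τa + (1 - α) * U τb > U τ := by
  obtain ⟨hτ1, hτ2⟩ := hτ
  have hτmem : τ ∈ Set.Icc τa τb := ⟨le_of_lt hτ1, le_of_lt hτ2⟩
  have hτamem : τa ∈ Set.Icc τa τb := Set.left_mem_Icc.2 hab.le
  have hτbmem : τb ∈ Set.Icc τa τb := Set.right_mem_Icc.2 hab.le
  set h : ℝ → ℝ := fun s => mH s - mL s with hh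
  set g : ℝ → ℝ := fun s => h s * f s with hg
  have hgc : Continuous g := (hmH.sub hmL).mul hf
  have hInt : ∀ (F : ℝ → ℝ), Continuous F → ∀ a b : ℝ,
      IntervalIntegrable F MeasureTheory.volume a b :=
    fun F hF a b => hF.intervalIntegrable a b
  -- Key integrals
  set Fa : ℝ := ∫ s in τa..τ, f s with hFa
  set Fb : ℝ := ∫ s in τ..τb, f s with hFb
  set Ga : ℝ := ∫ s in τa..τ, g s with hGa
  set Gb : ℝ := ∫ s in τ..τb, g s with hGb
  have hFapos : 0 < Fa := by
    apply intervalIntegral.intervalIntegral_pos_of_pos_on (hInt f hf τa τ) _ hτ1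
    intro x hx
    exact hfpos x ⟨hx.1.le, hx.2.le.trans hτ2.le⟩
  have hFbpos : 0 < Fb := by
    apply intervalIntegral.intervalIntegral_pos_of_pos_on (hInt f hf τ τb) _ hτ2
    intro x hx
    exact hfpos x ⟨hτ1.le.trans hx.1.le, hx.2.le⟩
  have hFab : 0 < Fa + Fb := by linarith
  -- strict inequalities between G and h τ * F
  have hA : 0 < ∫ s in τ..τb, (h s - h τ) * f s := by
    apply intervalIntegral.intervalIntegral_pos_of_pos_on
      (hInt _ (((hmH.sub hmL).sub continuous_const).mul hf) τ τb) _ hτ2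
    intro x hx
    have hxm : x ∈ Set.Icc τa τb := ⟨hτ1.le.trans hx.1.le, hx.2.le⟩
    have h1 : h τ < h x := hinc hτmem hxm hx.1
    show 0 < (h x - h τ) * f x
    exact mul_pos (by linarith) (hfpos x hxm)
  have hB : 0 < ∫ s in τa..τ, (h τ - h s) * f s := by
    apply intervalIntegral.intervalIntegral_pos_of_pos_on
      (hInt _ ((continuous_const.sub (hmH.sub hmL)).mul hf) τa τ) _ hτ1
    intro x hx
    have hxm : x ∈ Set.Icc τa τb := ⟨hx.1.le, hx.2.le.trans hτ2.le⟩
    have h1 : h x < h τ := hinc hxm hτmem hx.2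
    show 0 < (h τ - h x) * f x
    exact mul_pos (by linarith) (hfpos x hxm)
  have hGbgt : h τ * Fb < Gb := by
    have : (∫ s in τ..τb, (h s - h τ) * f s) = Gb - h τ * Fb := by
      have : (∫ s in τ..τb, (h s - h τ) * f s)
          = (∫ s in τ..τb, g s) - ∫ s in τ..τb, h τ * f s := by
        rw [← intervalIntegral.integral_sub (hInt g hgc τ τb)
          (hInt (fun s => h τ * f s) (continuous_const.mul hf) τ τb)]
        congr 1; ext s; simp [hg]; ring
      rw [this, intervalIntegral.integral_const_mul]
    linarith [hA, this ▸ hA]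
  have hGalt : Ga < h τ * Fa := by
    have : (∫ s in τa..τ, (h τ - h s) * f s) = h τ * Fa - Ga := by
      have : (∫ s in τa..τ, (h τ - h s) * f s)
          = (∫ s in τa..τ, h τ * f s) - ∫ s in τa..τ, g s := by
        rw [← intervalIntegral.integral_sub (hInt (fun s => h τ * f s) (continuous_const.mul hf) τa τ)
          (hInt g hgc τa τ)]
        congr 1; ext s; simp [hg]; ring
      rw [this, intervalIntegral.integral_const_mul]
    linarith [this ▸ hB]
  -- decompose F and U at the three points
  have hsplitF : (∫ s in (0:ℝ)..τ, f s) = (∫ s in (0:ℝ)..τa, f s) + Fa := by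
    rw [hFa, ← intervalIntegral.integral_add_adjacent_intervals
      (hInt f hf 0 τa) (hInt f hf τa τ)]
  have hsplitFb : (∫ s in (0:ℝ)..τb, f s) = (∫ s in (0:ℝ)..τa, f s) + Fa + Fb := by
    rw [← intervalIntegral.integral_add_adjacent_intervals
      (hInt f hf 0 τ) (hInt f hf τ τb), hsplitF]
  -- U differences
  have hUdiff : ∀ x y : ℝ, U y - U x = ∫ s in x..y, g s := by
    intro x y
    rw [hU x, hU y]
    have h1 : (∫ s in (0:ℝ)..y, mH s * f s) - (∫ s in (0:ℝ)..x, mH s * f s)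
        = ∫ s in x..y, mH s * f s :=
      intervalIntegral.integral_interval_sub_left (hInt _ (hmH.mul hf) 0 y)
        (hInt _ (hmH.mul hf) 0 x)
    have h2 : (∫ s in x..(1:ℝ), mL s * f s) - (∫ s in y..(1:ℝ), mL s * f s)
        = ∫ s in x..y, mL s * f s := by
      rw [← intervalIntegral.integral_add_adjacent_intervals
        (hInt (fun s => mL s * f s) (hmL.mul hf) x y) (hInt (fun s => mL s * f s) (hmL.mul hf) y 1)]
      ring
    have h3 : (∫ s in x..y, mH s * f s) - (∫ s in x..y, mL s * f s)
        = ∫ s in x..y, g s := by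
      rw [← intervalIntegral.integral_sub (hInt (fun s => mH s * f s) (hmH.mul hf) x y)
        (hInt (fun s => mL s * f s) (hmL.mul hf) x y)]
      congr 1; ext s; simp [hg, hh]; ring
    linarith
  have hUa : U τa - U τ = -Ga := by
    have := hUdiff τ τa
    rw [intervalIntegral.integral_symm] at this
    linarith [this]
  have hUb : U τb - U τ = Gb := hUdiff τ τb
  -- the weight
  refine ⟨Fb / (Fa + Fb), ⟨div_pos hFbpos hFab, by
    rw [div_lt_one hFab]; linarith⟩, ?_, ?_, ?_⟩
  · rw [hC τa, hC τb, hC τ, hsplitF, hsplitFb]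
    field_simp
    ring
  · intro α' _ hα'
    have hCsum : Fb / (Fa + Fb) * C τa + (1 - Fb / (Fa + Fb)) * C τb = C τ := by
      rw [hC τa, hC τb, hC τ, hsplitF, hsplitFb]
      field_simp
      ring
    have hCne : C τa ≠ C τb := by
      rw [hC τa, hC τb, hsplitFb]
      intro hEq
      nlinarith
    have : (α' - Fb / (Fa + Fb)) * (C τa - C τb) = 0 := by linarith
    rcases mul_eq_zero.1 this with hz | hz
    · linarith
    · exact absurd (by linarith : C τa = C τb) hCne
  · have key : Fa * Gb > Fb * Ga := by nlinarith
    have : Fb / (Fa + Fb) * U τa + (1 - Fb / (Fa + Fb)) * U τb - U τ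
        = (Fa * Gb - Fb * Ga) / (Fa + Fb) := by
      have e1 : U τa = U τ - Ga := by linarith
      have e2 : U τb = U τ + Gb := by linarith
      rw [e1, e2]
      field_simp
      ring
    have hpos : 0 < (Fa * Gb - Fb * Ga) / (Fa + Fb) := div_pos (by linarith) hFab
    linarith
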